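/- Let X be an α-stable Lévy process with negative jumps and t > 0. Then there exists k > 0 such that P(M_t^- > x) · x^α → k·t as x → ∞, where M_t^- is the maximum loss up to time t. -/

import Mathlib

open MeasureTheory ProbabilityTheory Set Filter

open Topology

/-- A (real-valued) Lévy process: measurable, starts at zero, càdlàg paths,
stationary increments, independent increments. -/
structure IsLevyProcess {Ω : Type*} [MeasurableSpace Ω] (P : Measure Ω)
    (X : ℝ → Ω → ℝ) : Prop where
  meas : ∀ t : ℝ, Measurable (X t)
  zero : ∀ ω, X 0 ω = 0
  rightCont : ∀ ω, ∀ t : ℝ, ContinuousWithinAt (fun s => X s ω) (Set.Ici t) t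
  leftLimits : ∀ ω, ∀ t : ℝ, 0 < t →
    ∃ l : ℝ, Filter.Tendsto (fun s => X s ω) (nhdsWithin t (Set.Iio t)) (nhds l)
  stationary : ∀ s t : ℝ, 0 ≤ s → 0 ≤ t →
    P.map (fun ω => X (s + t) ω - X s ω) = P.map (X t)
  indep : ∀ n : ℕ, ∀ τ : Fin (n + 1) → ℝ, Monotone τ →
    iIndepFun
      (fun i : Fin n => fun ω => X (τ i.succ) ω - X (τ i.castSucc) ω) P

/-- Self-similarity with index `α`: `(X_{bt})_t` has the same law as `(b^{1/α} X_t)_t`. -/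
def SelfSimilar {Ω : Type*} [MeasurableSpace Ω] (P : Measure Ω)
    (X : ℝ → Ω → ℝ) (α : ℝ) : Prop :=
  ∀ b : ℝ, 0 < b →
    P.map (fun ω => fun t : ℝ => X (b * t) ω)
      = P.map (fun ω => fun t : ℝ => b ^ (1 / α) * X t ω)

/-- Telescoping sum of increments along a finite grid. -/
lemma telescope_fin {m : ℕ} (g : Fin (m + 1) → ℝ) (j : Fin (m + 1)) :
    ∑ l ∈ Finset.univ.filter (fun l : Fin m => l.castSucc < j),
      (g l.succ - g l.castSucc) = g j - g 0 := by
  induction j using Fin.induction with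
  | zero =>
      have : Finset.univ.filter (fun l : Fin m => l.castSucc < 0) = ∅ := by
        apply Finset.filter_false_of_mem
        intro l _
        exact not_lt_of_ge (Fin.zero_le _)
      simp [this]
  | succ i ih =>
      have hset : Finset.univ.filter (fun l : Fin m => l.castSucc < i.succ)
          = insert i (Finset.univ.filter (fun l : Fin m => l.castSucc < i.castSucc)) := by
        ext l
        simp only [Finset.mem_filter, Finset.mem_univ, true_and, Finset.mem_insert]
        constructor
        · intro h
          rcases eq_or_ne l i with rfl | hne
          · exact Or.inl rfl
          · refine Or.inr ?_
            have hv : l.val ≠ i.val := fun hv => hne (Fin.ext hv)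
            simp only [Fin.lt_def, Fin.coe_castSucc, Fin.val_succ] at h ⊢
            omega
        · rintro (rfl | h)
          · exact Fin.castSucc_lt_succ
          · exact lt_trans h Fin.castSucc_lt_succ
      have hnotmem : i ∉ Finset.univ.filter (fun l : Fin m => l.castSucc < i.castSucc) := by
        simp
      rw [hset, Finset.sum_insert hnotmem, ih]
      ring

/-- A path that is right-continuous everywhere and has left limits on `(0,∞)` is bounded
above on `[0,T]`. -/
lemma bddAbove_of_cadlag (f : ℝ → ℝ)
    (hrc : ∀ s : ℝ, ContinuousWithinAt f (Set.Ici s) s)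
    (hll : ∀ s : ℝ, 0 < s → ∃ l : ℝ, Tendsto f (nhdsWithin s (Set.Iio s)) (nhds l))
    (T : ℝ) : ∃ C : ℝ, ∀ s ∈ Icc (0 : ℝ) T, f s ≤ C := by
  have hcomp : IsCompact (Icc (0 : ℝ) T) := isCompact_Icc
  have : ∃ C : ℝ, ∀ s ∈ Icc (0 : ℝ) T, f s ≤ C := by
    refine hcomp.induction_on (p := fun S => ∃ C : ℝ, ∀ s ∈ S, f s ≤ C) ⟨0, by simp⟩
      (fun s t hst ⟨C, hC⟩ => ⟨C, fun u hu => hC u (hst hu)⟩)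
      (fun s t ⟨C, hC⟩ ⟨C', hC'⟩ => ⟨max C C', fun u hu => by
        rcases hu with hu | hu
        · exact (hC u hu).trans (le_max_left _ _)
        · exact (hC' u hu).trans (le_max_right _ _)⟩) ?_
    intro x hx
    have hR : f ⁻¹' Iio (f x + 1) ∈ nhdsWithin x (Ici x) :=
      (hrc x) (Iio_mem_nhds (by linarith))
    rcases lt_or_ge 0 x with hx0 | hx0
    · obtain ⟨l, hl⟩ := hll x hx0
      have hL : f ⁻¹' Iio (l + 1) ∈ nhdsWithin x (Iio x) := hl (Iio_mem_nhds (by linarith))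
      refine ⟨f ⁻¹' Iio (l + 1) ∪ f ⁻¹' Iio (f x + 1), ?_, ⟨max (l + 1) (f x + 1), ?_⟩⟩
      · have hmem : f ⁻¹' Iio (l + 1) ∪ f ⁻¹' Iio (f x + 1) ∈ nhds x := by
          have : nhds x = nhdsWithin x (Iio x ∪ Ici x) := by
            rw [Iio_union_Ici, nhdsWithin_univ]
          rw [this, nhdsWithin_union]
          exact Filter.mem_sup.2 ⟨Filter.mem_of_superset hL subset_union_left,
            Filter.mem_of_superset hR subset_union_right⟩
        exact mem_nhdsWithin_of_mem_nhds hmem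
      · intro s hs
        rcases hs with hs | hs
        · exact le_trans (le_of_lt hs) (le_max_left _ _)
        · exact le_trans (le_of_lt hs) (le_max_right _ _)
    · refine ⟨f ⁻¹' Iio (f x + 1), ?_, ⟨f x + 1, fun s hs => le_of_lt hs⟩⟩
      have hsub : Icc (0 : ℝ) T ⊆ Ici x := fun u hu => le_trans hx0 hu.1
      exact nhdsWithin_mono x hsub hR
  exact this

/-- Right-continuity allows replacing a real time `v < w` by a nearby time from a dense set,
keeping a strict inequality `f · < y`. -/
lemma exists_dense_lt (f : ℝ → ℝ) (hrc : ∀ s : ℝ, ContinuousWithinAt f (Set.Ici s) s)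
    {E : Set ℝ} {T : ℝ} (hE : ∀ a b : ℝ, 0 ≤ a → a < b → b ≤ T → (E ∩ Ioo a b).Nonempty)
    {v w y : ℝ} (hv0 : 0 ≤ v) (hvw : v < w) (hwT : w ≤ T) (hfv : f v < y) :
    ∃ e ∈ E, e ∈ Ioo v w ∧ f e < y := by
  have h1 : f ⁻¹' Iio y ∈ nhdsWithin v (Ici v) := (hrc v) (Iio_mem_nhds hfv)
  rw [mem_nhdsWithin] at h1
  obtain ⟨U, hUopen, hvU, hU⟩ := h1
  obtain ⟨δ, hδ, hball⟩ := Metric.isOpen_iff.1 hUopen v hvU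
  obtain ⟨e, heE, heI⟩ := hE v (min w (v + δ)) hv0 (lt_min hvw (by linarith)) (le_trans (min_le_left _ _) hwT)
  refine ⟨e, heE, ⟨heI.1, lt_of_lt_of_le heI.2 (min_le_left _ _)⟩, ?_⟩
  have heU : e ∈ U := hball (by
    simp only [Metric.mem_ball, Real.dist_eq]
    have := lt_of_lt_of_le heI.2 (min_le_right _ _)
    have := heI.1
    rw [abs_of_pos (by linarith)]
    linarith)
  exact hU ⟨heU, le_of_lt heI.1⟩

/-- Same, for `f · > y`. -/
lemma exists_dense_gt (f : ℝ → ℝ) (hrc : ∀ s : ℝ, ContinuousWithinAt f (Set.Ici s) s)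
    {E : Set ℝ} {T : ℝ} (hE : ∀ a b : ℝ, 0 ≤ a → a < b → b ≤ T → (E ∩ Ioo a b).Nonempty)
    {v w y : ℝ} (hv0 : 0 ≤ v) (hvw : v < w) (hwT : w ≤ T) (hfv : y < f v) :
    ∃ e ∈ E, e ∈ Ioo v w ∧ y < f e := by
  have := exists_dense_lt (fun s => -f s)
    (fun s => ((hrc s).neg : ContinuousWithinAt (fun u => -f u) (Set.Ici s) s))
    hE hv0 hvw hwT (show -f v < -y from neg_lt_neg hfv)
  obtain ⟨e, heE, heI, hfe⟩ := this
  exact ⟨e, heE, heI, by have := neg_lt_neg hfe; simpa using this⟩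

/-- Reduction of the infimum event to a countable dense set of times. -/
lemma inf_event_reduce (f : ℝ → ℝ) (hrc : ∀ s : ℝ, ContinuousWithinAt f (Set.Ici s) s)
    {E : Set ℝ} {T : ℝ} (hT : 0 < T) (hTE : T ∈ E) (hsub : E ⊆ Icc 0 T)
    (hE : ∀ a b : ℝ, 0 ≤ a → a < b → b ≤ T → (E ∩ Ioo a b).Nonempty) (y : ℝ) :
    (∃ v : ℝ, 0 ≤ v ∧ v ≤ T ∧ f v < y) ↔ (∃ v ∈ E, f v < y) := by
  constructor
  · rintro ⟨v, hv0, hvT, hfv⟩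
    rcases eq_or_lt_of_le hvT with rfl | hvT'
    · exact ⟨v, hTE, hfv⟩
    · obtain ⟨e, heE, _, hfe⟩ := exists_dense_lt f hrc hE hv0 hvT' le_rfl hfv
      exact ⟨e, heE, hfe⟩
  · rintro ⟨v, hvE, hfv⟩
    exact ⟨v, (hsub hvE).1, (hsub hvE).2, hfv⟩

/-- Reduction of the drawdown event to a countable dense set of times. -/
lemma drawdown_event_reduce (f : ℝ → ℝ) (hrc : ∀ s : ℝ, ContinuousWithinAt f (Set.Ici s) s)
    {E : Set ℝ} {T : ℝ} (hT : 0 < T) (hTE : T ∈ E) (hsub : E ⊆ Icc 0 T)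
    (hE : ∀ a b : ℝ, 0 ≤ a → a < b → b ≤ T → (E ∩ Ioo a b).Nonempty) {x : ℝ} (hx : 0 < x) :
    (∃ u v : ℝ, 0 ≤ u ∧ u ≤ v ∧ v ≤ T ∧ x < f u - f v) ↔
      (∃ u ∈ E, ∃ v ∈ E, u ≤ v ∧ x < f u - f v) := by
  constructor
  · rintro ⟨u, v, hu0, huv, hvT, hfx⟩
    have huv' : u < v := by
      rcases eq_or_lt_of_le huv with rfl | h
      · exfalso; simp at hfx; linarith
      · exact h
    -- first replace v
    have hstep : ∃ v' ∈ E, u < v' ∧ x < f u - f v' := by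
      rcases eq_or_lt_of_le hvT with rfl | hvT'
      · exact ⟨v, hTE, huv', hfx⟩
      · obtain ⟨v', hv'E, hv'I, hfv'⟩ := exists_dense_lt f hrc hE
          (le_trans hu0 huv) hvT' le_rfl (show f v < f u - x by linarith)
        exact ⟨v', hv'E, lt_trans huv' hv'I.1, by linarith⟩
    obtain ⟨v', hv'E, huv'2, hfx'⟩ := hstep
    -- then replace u
    obtain ⟨u', hu'E, hu'I, hfu'⟩ := exists_dense_gt f hrc hE hu0 huv'2 (hsub hv'E).2
      (show x + f v' < f u by linarith)
    exact ⟨u', hu'E, v', hv'E, le_of_lt hu'I.2, by linarith⟩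
  · rintro ⟨u, huE, v, hvE, huv, hfx⟩
    exact ⟨u, v, (hsub huE).1, huv, (hsub hvE).2, hfx⟩

section GridStep

variable {Ω : Type*} [MeasureSpace Ω] [IsProbabilityMeasure (ℙ : Measure Ω)]

/-- Key decoupling inequality on a finite grid. -/
lemma grid_step (X : ℝ → Ω → ℝ) (hX : IsLevyProcess ℙ X) {m : ℕ}
    (σ : Fin (m + 1) → ℝ) (hσ : Monotone σ) (hσ0 : σ 0 = 0) (a x : ℝ)
    (Mfull Sfull : Set Ω) (hM : MeasurableSet Mfull) (hS : MeasurableSet Sfull)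
    (hCM : ∀ i j : Fin (m + 1), i ≤ j → {ω | x < X (σ i) ω - X (σ j) ω} ⊆ Mfull)
    (hBS : ∀ i : Fin (m + 1), {ω | a < X (σ i) ω} ⊆ Sfull) :
    ℙ {ω | ∃ i j : Fin (m + 1), i ≤ j ∧ a < X (σ i) ω ∧ x < X (σ i) ω - X (σ j) ω}
      ≤ ℙ Sfull * ℙ Mfull := by
  classical
  set Y : Fin m → Ω → ℝ := fun l ω => X (σ l.succ) ω - X (σ l.castSucc) ω with hY
  have hInd : iIndepFun Y ℙ := hX.indep m σ hσ
  have hYmeas : ∀ l, Measurable (Y l) := fun l => (hX.meas _).sub (hX.meas _)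
  have hval : ∀ (j : Fin (m + 1)) (ω : Ω),
      X (σ j) ω = ∑ l ∈ Finset.univ.filter (fun l : Fin m => l.castSucc < j), Y l ω := by
    intro j ω
    have := telescope_fin (fun j => X (σ j) ω) j
    rw [hσ0, hX.zero ω, sub_zero] at this
    exact this.symm
  set Sf : Fin (m + 1) → Finset (Fin m) :=
    fun i => Finset.univ.filter (fun l : Fin m => l.castSucc < i) with hSf
  set Tf : Fin (m + 1) → Finset (Fin m) :=
    fun i => Finset.univ.filter (fun l : Fin m => ¬ l.castSucc < i) with hTf
  set B : Fin (m + 1) → Set Ω :=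
    fun i => {ω | a < X (σ i) ω ∧ ∀ j : Fin (m + 1), j < i → X (σ j) ω ≤ a} with hB
  set C : Fin (m + 1) → Set Ω :=
    fun i => {ω | ∃ p q : Fin (m + 1), i ≤ p ∧ p ≤ q ∧ x < X (σ p) ω - X (σ q) ω} with hC
  -- the target is covered by the union of B i ∩ C i
  have hcover : {ω | ∃ i j : Fin (m + 1), i ≤ j ∧ a < X (σ i) ω ∧ x < X (σ i) ω - X (σ j) ω}
      ⊆ ⋃ i, B i ∩ C i := by
    rintro ω ⟨i, j, hij, hai, hxij⟩
    set Fs : Finset (Fin (m + 1)) := Finset.univ.filter (fun k => a < X (σ k) ω) with hFs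
    have hne : Fs.Nonempty := ⟨i, by simp [hFs, hai]⟩
    set i₀ := Fs.min' hne with hi₀
    have hi₀mem : i₀ ∈ Fs := Fs.min'_mem hne
    have hi₀a : a < X (σ i₀) ω := by
      have := hi₀mem; simp [hFs] at this; exact this
    refine mem_iUnion.2 ⟨i₀, ⟨⟨hi₀a, ?_⟩, ⟨i, j, ?_, hij, hxij⟩⟩⟩
    · intro j' hj'
      by_contra hcon
      push_neg at hcon
      have : j' ∈ Fs := by simp [hFs, hcon]
      exact absurd (Fs.min'_le _ this) (not_le_of_gt hj')
    · exact Fs.min'_le _ (by simp [hFs, hai])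
  -- measurability of B
  have hBmeas : ∀ i, MeasurableSet (B i) := by
    intro i
    have h1 : MeasurableSet {ω | a < X (σ i) ω} :=
      measurableSet_lt measurable_const (hX.meas _)
    have h2 : MeasurableSet {ω | ∀ j : Fin (m + 1), j < i → X (σ j) ω ≤ a} := by
      have : {ω | ∀ j : Fin (m + 1), j < i → X (σ j) ω ≤ a}
          = ⋂ j : Fin (m + 1), ⋂ (_ : j < i), {ω | X (σ j) ω ≤ a} := by
        ext ω; simp
      rw [this]
      exact MeasurableSet.iInter fun j => MeasurableSet.iInter fun _ =>
        measurableSet_le (hX.meas _) measurable_const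
    exact h1.inter h2
  have hCmeas : ∀ i, MeasurableSet (C i) := by
    intro i
    have : C i = ⋃ p : Fin (m + 1), ⋃ q : Fin (m + 1), ⋃ (_ : i ≤ p), ⋃ (_ : p ≤ q),
        {ω | x < X (σ p) ω - X (σ q) ω} := by
      ext ω
      simp only [hC, mem_setOf_eq, mem_iUnion]
      constructor
      · rintro ⟨p, q, h1, h2, h3⟩; exact ⟨p, q, h1, h2, h3⟩
      · rintro ⟨p, q, h1, h2, h3⟩; exact ⟨p, q, h1, h2, h3⟩
    rw [this]
    exact MeasurableSet.iUnion fun p => MeasurableSet.iUnion fun q =>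
      MeasurableSet.iUnion fun _ => MeasurableSet.iUnion fun _ =>
        measurableSet_lt measurable_const ((hX.meas _).sub (hX.meas _))
  -- independence: ℙ (B i ∩ C i) = ℙ (B i) * ℙ (C i)
  have hindep : ∀ i, ℙ (B i ∩ C i) = ℙ (B i) * ℙ (C i) := by
    intro i
    have hdisj : Disjoint (Sf i) (Tf i) := Finset.disjoint_filter_filter_not _ _ _
    have hIF := hInd.indepFun_finset (Sf i) (Tf i) hdisj hYmeas
    set WS : Ω → (↥(Sf i) → ℝ) := fun ω l => Y (↑l) ω with hWS
    set WT : Ω → (↥(Tf i) → ℝ) := fun ω l => Y (↑l) ω with hWT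
    -- describe X (σ j) via sums over the subtype, for j ≤ i
    have hsumS : ∀ (ω : Ω) (j : Fin (m + 1)), j ≤ i →
        X (σ j) ω = ∑ l : ↥(Sf i), if (l : Fin m).castSucc < j then Y (↑l) ω else 0 := by
      intro ω j hj
      rw [hval j ω, Finset.sum_coe_sort (Sf i) (fun l => if l.castSucc < j then Y l ω else 0),
        ← Finset.sum_filter]
      congr 1
      rw [hSf, Finset.filter_filter]
      ext l
      simp only [Finset.mem_filter, Finset.mem_univ, true_and]
      exact ⟨fun h => ⟨lt_of_lt_of_le h hj, h⟩, fun h => h.2⟩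
    have hXi : ∀ ω : Ω, X (σ i) ω = ∑ l : ↥(Sf i), Y (↑l) ω := by
      intro ω
      rw [hval i ω, Finset.sum_coe_sort (Sf i) (fun l => Y l ω)]
    -- describe increments after i via sums over Tf i
    have hsumT : ∀ (ω : Ω) (p q : Fin (m + 1)), i ≤ p → p ≤ q →
        X (σ p) ω - X (σ q) ω
          = -∑ l : ↥(Tf i), if (p ≤ (l : Fin m).castSucc ∧ (l : Fin m).castSucc < q)
              then Y (↑l) ω else 0 := by
      intro ω p q hip hpq
      have hsub : Sf p ⊆ Sf q := by
        intro l hl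
        simp only [hSf, Finset.mem_filter, Finset.mem_univ, true_and] at hl ⊢
        exact lt_of_lt_of_le hl hpq
      have hsd : Finset.univ.filter
            (fun l : Fin m => ¬ l.castSucc < i ∧ (p ≤ l.castSucc ∧ l.castSucc < q))
          = Sf q \ Sf p := by
        ext l
        simp only [hSf, Finset.mem_filter, Finset.mem_univ, true_and, Finset.mem_sdiff]
        constructor
        · rintro ⟨h1, h2, h3⟩
          exact ⟨h3, fun hc => (not_lt_of_ge h2) hc⟩
        · rintro ⟨h1, h2⟩
          push_neg at h2
          exact ⟨fun hc => absurd (le_trans hip h2) (not_le_of_gt hc), h2, h1⟩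
      rw [hval p ω, hval q ω, Finset.sum_coe_sort (Tf i)
        (fun l => if (p ≤ l.castSucc ∧ l.castSucc < q) then Y l ω else 0),
        ← Finset.sum_filter, hTf, Finset.filter_filter, hsd,
        Finset.sum_sdiff_eq_sub hsub]
      simp only [hSf]
      ring
    -- B i as preimage
    set ES : Set (↥(Sf i) → ℝ) := {g | a < (∑ l : ↥(Sf i), g l)} ∩
        ⋂ j : Fin (m + 1), ⋂ (_ : j < i), {g | (∑ l : ↥(Sf i),
          if (l : Fin m).castSucc < j then g l else 0) ≤ a} with hES
    set ET : Set (↥(Tf i) → ℝ) := ⋃ p : Fin (m + 1), ⋃ q : Fin (m + 1), ⋃ (_ : i ≤ p),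
        ⋃ (_ : p ≤ q), {g : ↥(Tf i) → ℝ |
          x < -∑ l : ↥(Tf i), if (p ≤ (l : Fin m).castSucc ∧ (l : Fin m).castSucc < q)
            then g l else 0} with hET
    have hESmeas : MeasurableSet ES := by
      refine MeasurableSet.inter ?_ ?_
      · exact measurableSet_lt measurable_const (Finset.measurable_sum _
          (fun l _ => measurable_pi_apply l))
      · refine MeasurableSet.iInter fun j => MeasurableSet.iInter fun _ =>
          measurableSet_le (Finset.measurable_sum _ (fun l _ => ?_)) measurable_const
        by_cases h : (l : Fin m).castSucc < j
        · simpa [h] using measurable_pi_apply l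
        · simp [h]
    have hETmeas : MeasurableSet ET := by
      refine MeasurableSet.iUnion fun p => MeasurableSet.iUnion fun q =>
        MeasurableSet.iUnion fun _ => MeasurableSet.iUnion fun _ => ?_
      refine measurableSet_lt measurable_const (Measurable.neg (Finset.measurable_sum _
        (fun l _ => ?_)))
      by_cases h : (p ≤ (l : Fin m).castSucc ∧ (l : Fin m).castSucc < q)
      · simpa [h] using measurable_pi_apply l
      · simp [h]
    have hBpre : B i = WS ⁻¹' ES := by
      ext ω
      simp only [hB, hES, mem_setOf_eq, mem_preimage, mem_inter_iff, mem_iInter, hWS]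
      constructor
      · rintro ⟨h1, h2⟩
        refine ⟨by rw [← hXi ω]; exact h1, fun j hj => ?_⟩
        rw [← hsumS ω j (le_of_lt hj)]
        exact h2 j hj
      · rintro ⟨h1, h2⟩
        refine ⟨by rw [hXi ω]; exact h1, fun j hj => ?_⟩
        rw [hsumS ω j (le_of_lt hj)]
        exact h2 j hj
    have hCpre : C i = WT ⁻¹' ET := by
      ext ω
      simp only [hC, hET, mem_setOf_eq, mem_preimage, mem_iUnion, hWT]
      constructor
      · rintro ⟨p, q, hip, hpq, hpx⟩
        exact ⟨p, q, hip, hpq, by rw [← hsumT ω p q hip hpq]; exact hpx⟩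
      · rintro ⟨p, q, hip, hpq, hpx⟩
        exact ⟨p, q, hip, hpq, by rw [hsumT ω p q hip hpq]; exact hpx⟩
    rw [hBpre, hCpre]
    exact hIF.measure_inter_preimage_eq_mul ES ET hESmeas hETmeas
  -- B's are pairwise disjoint
  have hBdisj : Pairwise (Function.onFun Disjoint B) := by
    have key : ∀ i j : Fin (m + 1), i < j → Disjoint (B i) (B j) := by
      intro i j h
      refine Set.disjoint_left.2 fun ω hωi hωj => ?_
      exact absurd hωi.1 (not_lt_of_ge (hωj.2 i h))
    intro i j hij
    rcases hij.lt_or_gt with h | h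
    · exact key i j h
    · exact (key j i h).symm
  -- assemble
  calc ℙ {ω | ∃ i j : Fin (m + 1), i ≤ j ∧ a < X (σ i) ω ∧ x < X (σ i) ω - X (σ j) ω}
      ≤ ℙ (⋃ i, B i ∩ C i) := measure_mono hcover
    _ ≤ ∑ i : Fin (m + 1), ℙ (B i ∩ C i) := measure_iUnion_fintype_le _ _
    _ = ∑ i : Fin (m + 1), ℙ (B i) * ℙ (C i) := by
        exact Finset.sum_congr rfl fun i _ => hindep i
    _ ≤ ∑ i : Fin (m + 1), ℙ (B i) * ℙ Mfull := by
        refine Finset.sum_le_sum fun i _ => ?_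
        refine mul_le_mul' le_rfl (measure_mono ?_)
        rintro ω ⟨p, q, hip, hpq, hx⟩
        exact hCM p q hpq hx
    _ = (∑ i : Fin (m + 1), ℙ (B i)) * ℙ Mfull := by rw [Finset.sum_mul]
    _ ≤ ℙ Sfull * ℙ Mfull := by
        refine mul_le_mul' ?_ le_rfl
        have hU := measure_iUnion (μ := (ℙ : Measure Ω)) hBdisj hBmeas
        rw [tsum_fintype] at hU
        rw [← hU]
        refine measure_mono ?_
        rintro ω hω
        obtain ⟨i, hi⟩ := mem_iUnion.1 hω
        exact hBS i hi.1

end GridStep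

section GridBound

variable {Ω : Type*} [MeasureSpace Ω] [IsProbabilityMeasure (ℙ : Measure Ω)]

lemma grid_bound (X : ℝ → Ω → ℝ) (hX : IsLevyProcess ℙ X) (t : ℝ)
    (D : Set ℝ) (hDsub : D ⊆ Icc 0 t) (G : Finset ℝ) (hGD : ∀ u ∈ G, u ∈ D)
    (h0G : (0 : ℝ) ∈ G) (x ε : ℝ) (hx : 0 < x)
    (Mfull Sfull : Set Ω) (hM : MeasurableSet Mfull) (hS : MeasurableSet Sfull)
    (hMsub : ∀ u ∈ D, ∀ v ∈ D, u ≤ v → {ω | x < X u ω - X v ω} ⊆ Mfull)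
    (hSsub : ∀ u ∈ D, {ω | ε * x < X u ω} ⊆ Sfull) :
    ℙ {ω | ∃ u ∈ G, ∃ v ∈ G, u ≤ v ∧ x < X u ω - X v ω}
      ≤ ℙ {ω | ∃ v : ℝ, 0 ≤ v ∧ v ≤ t ∧ X v ω < -((1 - ε) * x)} + ℙ Sfull * ℙ Mfull := by
  classical
  have hGpos : ∀ u ∈ G, 0 ≤ u := fun u hu => (hDsub (hGD u hu)).1
  -- order the grid
  set m := G.card - 1 with hm
  have hcard : G.card = m + 1 := by
    have : 0 < G.card := Finset.card_pos.2 ⟨0, h0G⟩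
    omega
  set ι := G.orderIsoOfFin hcard with hι
  set σ : Fin (m + 1) → ℝ := fun i => (ι i : ℝ) with hσ
  have hσmono : Monotone σ := by
    intro i j hij
    exact Subtype.coe_le_coe.2 (ι.monotone hij)
  have hσmem : ∀ i, σ i ∈ G := fun i => (ι i).2
  have hσsurj : ∀ u ∈ G, ∃ i : Fin (m + 1), σ i = u := by
    intro u hu
    refine ⟨ι.symm ⟨u, hu⟩, ?_⟩
    simp [hσ]
  have hσ0 : σ 0 = 0 := by
    obtain ⟨i0, hi0⟩ := hσsurj 0 h0G
    have h1 : σ 0 ≤ σ i0 := hσmono (Fin.zero_le _)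
    have h2 : 0 ≤ σ 0 := hGpos _ (hσmem 0)
    rw [hi0] at h1
    linarith
  -- split the event
  have hsplit : {ω | ∃ u ∈ G, ∃ v ∈ G, u ≤ v ∧ x < X u ω - X v ω}
      ⊆ {ω | ∃ v : ℝ, 0 ≤ v ∧ v ≤ t ∧ X v ω < -((1 - ε) * x)}
        ∪ {ω | ∃ i j : Fin (m + 1), i ≤ j ∧ ε * x < X (σ i) ω
            ∧ x < X (σ i) ω - X (σ j) ω} := by
    rintro ω ⟨u, hu, v, hv, huv, hx'⟩
    by_cases hc : X v ω < -((1 - ε) * x)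
    · exact Or.inl ⟨v, (hDsub (hGD v hv)).1, (hDsub (hGD v hv)).2, hc⟩
    · push_neg at hc
      have huv' : u < v := by
        rcases eq_or_lt_of_le huv with rfl | h
        · exfalso; rw [sub_self] at hx'; linarith
        · exact h
      obtain ⟨i, hi⟩ := hσsurj u hu
      obtain ⟨j, hj⟩ := hσsurj v hv
      have hij : i ≤ j := by
        by_contra hcon
        push_neg at hcon
        have := hσmono (le_of_lt hcon)
        rw [hi, hj] at this
        exact absurd (lt_of_lt_of_le huv' this) (lt_irrefl _)
      have hexp : (1 - ε) * x = x - ε * x := by ring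
      refine Or.inr ⟨i, j, hij, ?_, by rw [hi, hj]; exact hx'⟩
      rw [hi]
      rw [hexp] at hc
      linarith
  calc ℙ {ω | ∃ u ∈ G, ∃ v ∈ G, u ≤ v ∧ x < X u ω - X v ω}
      ≤ ℙ ({ω | ∃ v : ℝ, 0 ≤ v ∧ v ≤ t ∧ X v ω < -((1 - ε) * x)}
          ∪ {ω | ∃ i j : Fin (m + 1), i ≤ j ∧ ε * x < X (σ i) ω
              ∧ x < X (σ i) ω - X (σ j) ω}) := measure_mono hsplit
    _ ≤ ℙ {ω | ∃ v : ℝ, 0 ≤ v ∧ v ≤ t ∧ X v ω < -((1 - ε) * x)}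
          + ℙ {ω | ∃ i j : Fin (m + 1), i ≤ j ∧ ε * x < X (σ i) ω
              ∧ x < X (σ i) ω - X (σ j) ω} := measure_union_le _ _
    _ ≤ ℙ {ω | ∃ v : ℝ, 0 ≤ v ∧ v ≤ t ∧ X v ω < -((1 - ε) * x)} + ℙ Sfull * ℙ Mfull := by
        refine add_le_add le_rfl ?_
        refine grid_step X hX σ hσmono hσ0 (ε * x) x Mfull Sfull hM hS ?_ ?_
        · intro i j hij
          exact hMsub (σ i) (hGD _ (hσmem i)) (σ j) (hGD _ (hσmem j)) (hσmono hij)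
        · intro i
          exact hSsub (σ i) (hGD _ (hσmem i))

end GridBound

section Scaling

variable {Ω : Type*} [MeasureSpace Ω] [IsProbabilityMeasure (ℙ : Measure Ω)]

/-- The rationals of `[0,1]` together with `1`. -/
def D1 : Set ℝ := insert 1 ((fun q : ℚ => (q : ℝ)) '' {q : ℚ | 0 ≤ (q : ℝ) ∧ (q : ℝ) ≤ 1})

lemma D1_countable : D1.Countable :=
  (Set.Countable.image (Set.to_countable _) _).insert 1

lemma D1_subset : D1 ⊆ Icc (0 : ℝ) 1 := by
  rintro e (rfl | ⟨q, hq, rfl⟩)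
  · exact ⟨zero_le_one, le_rfl⟩
  · exact ⟨hq.1, hq.2⟩

lemma one_mem_D1 : (1 : ℝ) ∈ D1 := mem_insert _ _

lemma D1_dense : ∀ a b : ℝ, 0 ≤ a → a < b → b ≤ 1 → (D1 ∩ Ioo a b).Nonempty := by
  intro a b ha hab hb1
  obtain ⟨q, hq1, hq2⟩ := exists_rat_btwn hab
  refine ⟨(q : ℝ), Or.inr ⟨q, ⟨le_of_lt (lt_of_le_of_lt ha hq1), le_of_lt (lt_of_lt_of_le hq2 hb1)⟩, rfl⟩, hq1, hq2⟩

lemma inf_scaling (X : ℝ → Ω → ℝ) (hX : IsLevyProcess ℙ X) (α : ℝ)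
    (hss : SelfSimilar ℙ X α) (t : ℝ) (ht : 0 < t) (y : ℝ) :
    ℙ {ω | ∃ v : ℝ, 0 ≤ v ∧ v ≤ t ∧ X v ω < -y}
      = ℙ {ω | ∃ v : ℝ, 0 ≤ v ∧ v ≤ 1 ∧ X v ω < -(y / t ^ (1 / α))} := by
  classical
  have hc : 0 < t ^ (1 / α) := Real.rpow_pos_of_pos ht _
  have hΦ : Measurable (fun ω => fun s : ℝ => X (t * s) ω) :=
    measurable_pi_iff.2 fun s => hX.meas (t * s)
  have hΨ : Measurable (fun ω => fun s : ℝ => t ^ (1 / α) * X s ω) :=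
    measurable_pi_iff.2 fun s => (hX.meas s).const_mul _
  set 𝔈 : Set (ℝ → ℝ) := ⋃ e ∈ D1, {f : ℝ → ℝ | f e < -y} with h𝔈def
  have h𝔈 : MeasurableSet 𝔈 :=
    MeasurableSet.biUnion D1_countable fun e _ =>
      measurableSet_lt (measurable_pi_apply e) measurable_const
  have hmap : ℙ ((fun ω => fun s : ℝ => X (t * s) ω) ⁻¹' 𝔈)
      = ℙ ((fun ω => fun s : ℝ => t ^ (1 / α) * X s ω) ⁻¹' 𝔈) := by
    rw [← Measure.map_apply hΦ h𝔈, ← Measure.map_apply hΨ h𝔈, hss t ht]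
  have hΦpre : (fun ω => fun s : ℝ => X (t * s) ω) ⁻¹' 𝔈
      = {ω | ∃ v : ℝ, 0 ≤ v ∧ v ≤ t ∧ X v ω < -y} := by
    ext ω
    simp only [h𝔈def, mem_preimage, mem_iUnion, mem_setOf_eq]
    have h1 : (∃ e, ∃ _ : e ∈ D1, X (t * e) ω < -y)
        ↔ (∃ v ∈ (fun e => t * e) '' D1, X v ω < -y) := by
      constructor
      · rintro ⟨e, he, hlt⟩
        exact ⟨t * e, ⟨e, he, rfl⟩, hlt⟩
      · rintro ⟨v, ⟨e, he, rfl⟩, hlt⟩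
        exact ⟨e, he, hlt⟩
    refine h1.trans (inf_event_reduce (fun s => X s ω) (hX.rightCont ω)
      (E := (fun e => t * e) '' D1) ht ⟨1, one_mem_D1, mul_one t⟩ ?_ ?_ (-y)).symm
    · rintro v ⟨e, he, rfl⟩
      have he' := D1_subset he
      constructor
      · exact mul_nonneg (le_of_lt ht) he'.1
      · calc t * e ≤ t * 1 := mul_le_mul_of_nonneg_left he'.2 (le_of_lt ht)
          _ = t := mul_one t
    · intro a b ha hab hbt
      obtain ⟨e, heD, he1, he2⟩ := D1_dense (a / t) (b / t)
        (div_nonneg ha (le_of_lt ht)) (div_lt_div_of_pos_right hab ht)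
        (by rw [div_le_one ht]; exact hbt)
      exact ⟨t * e, ⟨e, heD, rfl⟩, (div_lt_iff₀' ht).1 he1, (lt_div_iff₀' ht).1 he2⟩
  have hΨpre : (fun ω => fun s : ℝ => t ^ (1 / α) * X s ω) ⁻¹' 𝔈
      = {ω | ∃ v : ℝ, 0 ≤ v ∧ v ≤ 1 ∧ X v ω < -(y / t ^ (1 / α))} := by
    ext ω
    simp only [h𝔈def, mem_preimage, mem_iUnion, mem_setOf_eq]
    have h1 : (∃ e, ∃ _ : e ∈ D1, t ^ (1 / α) * X e ω < -y)
        ↔ (∃ e ∈ D1, X e ω < -(y / t ^ (1 / α))) := by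
      have key : ∀ z : ℝ, (t ^ (1 / α) * z < -y ↔ z < -(y / t ^ (1 / α))) := by
        intro z
        rw [show -(y / t ^ (1 / α)) = -y / t ^ (1 / α) by ring, lt_div_iff₀' hc]
      constructor
      · rintro ⟨e, he, hlt⟩
        exact ⟨e, he, (key _).1 hlt⟩
      · rintro ⟨e, he, hlt⟩
        exact ⟨e, he, (key _).2 hlt⟩
    refine h1.trans (inf_event_reduce (fun s => X s ω) (hX.rightCont ω)
      (E := D1) one_pos one_mem_D1 D1_subset D1_dense (-(y / t ^ (1 / α)))).symm
  rw [← hΦpre, ← hΨpre, hmap]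

end Scaling

set_option maxHeartbeats 2000000 in
/-- (Theorem 1) Let `X` be an α-stable Lévy process with negative jumps and `t > 0`.
Then there exists `k > 0` such that `P(M_t⁻ > x) ⬝ x^α → k t` as `x → ∞`. -/
theorem maxLoss_tail_stable {Ω : Type*} [MeasureSpace Ω]
    [IsProbabilityMeasure (ℙ : Measure Ω)] (X : ℝ → Ω → ℝ) (α : ℝ)
    (hα : 0 < α ∧ α < 2) (hX : IsLevyProcess ℙ X) (hss : SelfSimilar ℙ X α)
    (hnegjumps : ℙ {ω | ∃ s : ℝ, 0 < s ∧ X s ω < Function.leftLim (fun r => X r ω) s} ≠ 0)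
    (hBertoin : ∃ k : ℝ, 0 < k ∧ Filter.Tendsto
      (fun x : ℝ => (ℙ {ω | ∃ v : ℝ, 0 ≤ v ∧ v ≤ 1 ∧ X v ω < -x}).toReal * x ^ α)
      Filter.atTop (nhds k))
    (t : ℝ) (ht : 0 < t) :
    ∃ k : ℝ, 0 < k ∧ Filter.Tendsto
      (fun x : ℝ => (ℙ {ω | ∃ u v : ℝ, 0 ≤ u ∧ u ≤ v ∧ v ≤ t ∧ x < X u ω - X v ω}).toReal * x ^ α)
      Filter.atTop (nhds (k * t)) := by
  classical
  obtain ⟨hα0, hα2⟩ := hα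
  obtain ⟨k, hk, hB⟩ := hBertoin
  refine ⟨k, hk, ?_⟩
  -- the countable dense set of times
  set D : Set ℝ := insert t ((fun q : ℚ => (q : ℝ)) '' {q : ℚ | 0 ≤ (q : ℝ) ∧ (q : ℝ) ≤ t})
    with hDdef
  have hDc : D.Countable := (Set.Countable.image (Set.to_countable _) _).insert t
  have hDsub : D ⊆ Icc 0 t := by
    rintro e (rfl | ⟨q, hq, rfl⟩)
    · exact ⟨le_of_lt ht, le_rfl⟩
    · exact ⟨hq.1, hq.2⟩
  have htD : t ∈ D := mem_insert _ _
  have h0D : (0 : ℝ) ∈ D := Or.inr ⟨0, ⟨by norm_num, by norm_num; linarith⟩, by norm_num⟩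
  have hDdense : ∀ a b : ℝ, 0 ≤ a → a < b → b ≤ t → (D ∩ Ioo a b).Nonempty := by
    intro a b ha hab hbt
    obtain ⟨q, hq1, hq2⟩ := exists_rat_btwn hab
    exact ⟨(q : ℝ), Or.inr ⟨q, ⟨le_of_lt (lt_of_le_of_lt ha hq1),
      le_of_lt (lt_of_lt_of_le hq2 hbt)⟩, rfl⟩, hq1, hq2⟩
  -- events
  set EI : ℝ → Set Ω := fun y => {ω | ∃ v : ℝ, 0 ≤ v ∧ v ≤ t ∧ X v ω < -y} with hEIdef
  set EMc : ℝ → Set Ω := fun x => ⋃ u ∈ D, ⋃ v ∈ D, {ω | u ≤ v ∧ x < X u ω - X v ω}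
    with hEMcdef
  set ES : ℝ → Set Ω := fun y => ⋃ u ∈ D, {ω | y < X u ω} with hESdef
  have hEMc_mem : ∀ (x : ℝ) (ω : Ω),
      ω ∈ EMc x ↔ ∃ u ∈ D, ∃ v ∈ D, u ≤ v ∧ x < X u ω - X v ω := by
    intro x ω
    simp only [hEMcdef, mem_iUnion, mem_setOf_eq]
    constructor
    · rintro ⟨u, hu, v, hv, huv, h⟩; exact ⟨u, hu, v, hv, huv, h⟩
    · rintro ⟨u, hu, v, hv, huv, h⟩; exact ⟨u, hu, v, hv, huv, h⟩
  have hES_mem : ∀ (y : ℝ) (ω : Ω), ω ∈ ES y ↔ ∃ u ∈ D, y < X u ω := by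
    intro y ω; simp [hESdef]
  have hEMc_meas : ∀ x : ℝ, MeasurableSet (EMc x) := by
    intro x
    refine MeasurableSet.biUnion hDc fun u _ => MeasurableSet.biUnion hDc fun v _ => ?_
    by_cases h : u ≤ v
    · have : {ω : Ω | u ≤ v ∧ x < X u ω - X v ω} = {ω : Ω | x < X u ω - X v ω} := by
        ext ω; simp [h]
      rw [this]
      exact measurableSet_lt measurable_const ((hX.meas u).sub (hX.meas v))
    · have : {ω : Ω | u ≤ v ∧ x < X u ω - X v ω} = ∅ := by
        ext ω; simp [h]
      rw [this]; exact MeasurableSet.empty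
  have hES_meas : ∀ y : ℝ, MeasurableSet (ES y) :=
    fun y => MeasurableSet.biUnion hDc fun u _ =>
      measurableSet_lt measurable_const (hX.meas u)
  have hEM_eq : ∀ x : ℝ, 0 < x →
      {ω | ∃ u v : ℝ, 0 ≤ u ∧ u ≤ v ∧ v ≤ t ∧ x < X u ω - X v ω} = EMc x := by
    intro x hx
    ext ω
    rw [hEMc_mem x ω]
    have := drawdown_event_reduce (fun s => X s ω) (hX.rightCont ω)
      (E := D) ht htD hDsub hDdense hx
    simpa using this
  have hlow : ∀ y : ℝ,
      EI y ⊆ {ω | ∃ u v : ℝ, 0 ≤ u ∧ u ≤ v ∧ v ≤ t ∧ y < X u ω - X v ω} := by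
    rintro y ω ⟨v, hv0, hvt, hlt⟩
    exact ⟨0, v, le_rfl, hv0, hvt, by rw [hX.zero]; linarith⟩
  -- grid approximation
  obtain ⟨d, hd⟩ := Set.Countable.exists_eq_range hDc ⟨t, htD⟩
  set G : ℕ → Finset ℝ := fun n => insert (0 : ℝ) ((Finset.range (n + 1)).image d)
    with hGdef
  have hGD : ∀ n, ∀ u ∈ G n, u ∈ D := by
    intro n u hu
    rcases Finset.mem_insert.1 hu with rfl | hu
    · exact h0D
    · obtain ⟨i, _, rfl⟩ := Finset.mem_image.1 hu
      rw [hd]; exact mem_range_self i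
  have h0G : ∀ n, (0 : ℝ) ∈ G n := fun n => Finset.mem_insert_self _ _
  set A : ℝ → ℕ → Set Ω :=
    fun x n => {ω | ∃ u ∈ G n, ∃ v ∈ G n, u ≤ v ∧ x < X u ω - X v ω} with hAdef
  have hGmono : ∀ {n m : ℕ}, n ≤ m → G n ⊆ G m := by
    intro n m hnm
    refine Finset.insert_subset_insert _ (Finset.image_subset_image ?_)
    exact Finset.range_subset_range.2 (by omega)
  have hAmono : ∀ x : ℝ, Monotone (A x) := by
    intro x n m hnm
    rintro ω ⟨u, hu, v, hv, huv, hlt⟩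
    exact ⟨u, hGmono hnm hu, v, hGmono hnm hv, huv, hlt⟩
  have hAunion : ∀ x : ℝ, EMc x = ⋃ n, A x n := by
    intro x
    ext ω
    rw [hEMc_mem x ω]
    simp only [mem_iUnion, hAdef, mem_setOf_eq]
    constructor
    · rintro ⟨u, hu, v, hv, huv, hlt⟩
      rw [hd] at hu hv
      obtain ⟨i, rfl⟩ := hu
      obtain ⟨j, rfl⟩ := hv
      refine ⟨max i j, d i, ?_, d j, ?_, huv, hlt⟩
      · exact Finset.mem_insert_of_mem (Finset.mem_image_of_mem d
          (Finset.mem_range.2 (by omega)))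
      · exact Finset.mem_insert_of_mem (Finset.mem_image_of_mem d
          (Finset.mem_range.2 (by omega)))
    · rintro ⟨n, u, hu, v, hv, huv, hlt⟩
      exact ⟨u, hGD n u hu, v, hGD n v hv, huv, hlt⟩
  -- the key inequality
  have hstar : ∀ x ε : ℝ, 0 < x →
      ℙ (EMc x) ≤ ℙ (EI ((1 - ε) * x)) + ℙ (ES (ε * x)) * ℙ (EMc x) := by
    intro x ε hx
    have hsup : ℙ (EMc x) = ⨆ n, ℙ (A x n) := by
      rw [hAunion x]
      exact Monotone.measure_iUnion (hAmono x)
    conv_lhs => rw [hsup]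
    refine iSup_le fun n => ?_
    refine grid_bound X hX t D hDsub (G n) (hGD n) (h0G n) x ε hx
      (EMc x) (ES (ε * x)) (hEMc_meas x) (hES_meas _) ?_ ?_
    · intro u hu v hv huv ω hω
      exact (hEMc_mem x ω).2 ⟨u, hu, v, hv, huv, hω⟩
    · intro u hu ω hω
      exact (hES_mem _ ω).2 ⟨u, hu, hω⟩
  -- limit of the infimum-event tail
  have hHt : Tendsto (fun x : ℝ => (ℙ (EI x)).toReal * x ^ α) atTop (𝓝 (k * t)) := by
    have hc : (0 : ℝ) < t ^ (1 / α) := Real.rpow_pos_of_pos ht _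
    have hdiv : Tendsto (fun x : ℝ => x / t ^ (1 / α)) atTop atTop :=
      tendsto_id.atTop_div_const hc
    have hcomp : Tendsto (fun x : ℝ =>
        (ℙ {ω | ∃ v : ℝ, 0 ≤ v ∧ v ≤ 1 ∧ X v ω < -(x / t ^ (1 / α))}).toReal
          * (x / t ^ (1 / α)) ^ α) atTop (𝓝 k) := hB.comp hdiv
    have hmul := hcomp.mul_const t
    refine hmul.congr' ?_
    filter_upwards [eventually_gt_atTop (0 : ℝ)] with x hx
    have hscale := inf_scaling X hX α hss t ht x
    have hct : (t ^ (1 / α)) ^ α = t := by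
      rw [← Real.rpow_mul (le_of_lt ht), one_div_mul_cancel (ne_of_gt hα0), Real.rpow_one]
    have hxc : (x / t ^ (1 / α)) ^ α = x ^ α / t := by
      rw [Real.div_rpow (le_of_lt hx) (le_of_lt hc), hct]
    rw [hxc, hEIdef]
    simp only []
    rw [← hscale]
    field_simp
  -- the supremum-event tail vanishes
  have hbdd : ∀ ω : Ω, ∃ C : ℝ, ∀ s ∈ Icc (0 : ℝ) t, X s ω ≤ C :=
    fun ω => bddAbove_of_cadlag _ (hX.rightCont ω) (hX.leftLimits ω) t
  have hESanti : ∀ y y' : ℝ, y ≤ y' → ES y' ⊆ ES y := by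
    intro y y' hyy ω hω
    obtain ⟨u, hu, hlt⟩ := (hES_mem _ ω).1 hω
    exact (hES_mem _ ω).2 ⟨u, hu, lt_of_le_of_lt hyy hlt⟩
  have hinter : ⋂ n : ℕ, ES (n : ℝ) = ∅ := by
    ext ω
    simp only [mem_iInter, mem_empty_iff_false, iff_false]
    intro h
    obtain ⟨C, hC⟩ := hbdd ω
    obtain ⟨u, huD, hu⟩ := (hES_mem _ ω).1 (h (Nat.ceil (max C 0)))
    have h1 : X u ω ≤ C := hC u (hDsub huD)
    have h2 : (max C 0 : ℝ) ≤ (Nat.ceil (max C 0) : ℝ) := Nat.le_ceil _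
    have h3 : C ≤ max C 0 := le_max_left _ _
    linarith
  have hseq : Tendsto (fun n : ℕ => ℙ (ES (n : ℝ))) atTop (𝓝 0) := by
    have hti := tendsto_measure_iInter_atTop (μ := (ℙ : Measure Ω))
      (s := fun n : ℕ => ES (n : ℝ))
      (fun n => (hES_meas _).nullMeasurableSet)
      (fun n m hnm => hESanti _ _ (Nat.cast_le.2 hnm))
      ⟨0, measure_ne_top _ _⟩
    rw [hinter] at hti
    simpa [Function.comp_def] using hti
  have hseqR : Tendsto (fun n : ℕ => (ℙ (ES (n : ℝ))).toReal) atTop (𝓝 0) := by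
    have := (ENNReal.tendsto_toReal (a := 0) (by simp)).comp hseq
    simpa [Function.comp_def] using this
  have hr0 : Tendsto (fun y : ℝ => (ℙ (ES y)).toReal) atTop (𝓝 0) := by
    rw [Metric.tendsto_atTop] at hseqR ⊢
    intro δ hδ
    obtain ⟨N, hN⟩ := hseqR δ hδ
    refine ⟨(N : ℝ), fun y hy => ?_⟩
    have h1 : (ℙ (ES y)).toReal ≤ (ℙ (ES (N : ℝ))).toReal :=
      ENNReal.toReal_mono (measure_ne_top _ _) (measure_mono (hESanti _ _ hy))
    have h2 := hN N le_rfl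
    rw [Real.dist_eq, sub_zero] at h2 ⊢
    rw [abs_of_nonneg ENNReal.toReal_nonneg] at h2 ⊢
    exact lt_of_le_of_lt h1 h2
  -- final argument
  have hmain : Tendsto (fun x : ℝ => (ℙ (EMc x)).toReal * x ^ α) atTop (𝓝 (k * t)) := by
    rw [Metric.tendsto_atTop]
    intro δ hδ
    have hkt : (0 : ℝ) < k * t := mul_pos hk ht
    -- choose c' close to 1
    have hcont : ContinuousAt (fun c : ℝ => k * t / c ^ α) 1 := by
      have h1 : ContinuousAt (fun c : ℝ => c ^ α) 1 :=
        Real.continuousAt_rpow_const 1 α (Or.inl one_ne_zero)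
      exact continuousAt_const.div h1 (by simp [Real.one_rpow])
    obtain ⟨η, hη, hball⟩ := Metric.continuousAt_iff.1 hcont (δ / 4) (by linarith)
    set c' : ℝ := max (1 / 2) (1 - η / 2) with hc'def
    have hc'0 : 0 < c' := lt_of_lt_of_le (by norm_num) (le_max_left _ _)
    have hc'1 : c' < 1 := by
      rw [hc'def]
      apply max_lt (by norm_num) (by linarith)
    have hc'η : |c' - 1| < η := by
      have h1 : 1 - η / 2 ≤ c' := le_max_right _ _
      rw [abs_of_nonpos (by linarith)]
      linarith
    have hc'bound : k * t / c' ^ α < k * t + δ / 4 := by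
      have h2 := hball hc'η
      rw [Real.dist_eq] at h2
      simp only [Real.one_rpow, div_one] at h2
      have h3 := abs_lt.1 h2
      linarith [h3.2]
    set ε' : ℝ := 1 - c' with hε'def
    have hε'0 : 0 < ε' := by rw [hε'def]; linarith
    -- tail limits
    have hmulc : Tendsto (fun x : ℝ => c' * x) atTop atTop :=
      (tendsto_id (α := ℝ)).const_mul_atTop hc'0
    have hQ : Tendsto (fun x : ℝ => (ℙ (EI (c' * x))).toReal * x ^ α) atTop
        (𝓝 (k * t / c' ^ α)) := by
      have h1 := (hHt.comp hmulc).mul_const ((c' ^ α)⁻¹)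
      have h2 : k * t * (c' ^ α)⁻¹ = k * t / c' ^ α := by rw [div_eq_mul_inv]
      rw [h2] at h1
      refine Filter.Tendsto.congr' ?_ h1
      filter_upwards [eventually_gt_atTop (0 : ℝ)] with x hx
      simp only [Function.comp_apply]
      rw [Real.mul_rpow (le_of_lt hc'0) (le_of_lt hx)]
      have hca : (0 : ℝ) < c' ^ α := Real.rpow_pos_of_pos hc'0 _
      field_simp
    -- thresholds
    set δ'' : ℝ := min (1 / 2) (δ / (4 * (k * t + δ))) with hδ''def
    have hδ''0 : 0 < δ'' := lt_min (by norm_num) (by positivity)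
    have hδ''half : δ'' ≤ 1 / 2 := min_le_left _ _
    have hδ''small : δ'' * (k * t + δ) ≤ δ / 4 := by
      have h1 : δ'' ≤ δ / (4 * (k * t + δ)) := min_le_right _ _
      have h2 : (0 : ℝ) < k * t + δ := by linarith
      calc δ'' * (k * t + δ) ≤ (δ / (4 * (k * t + δ))) * (k * t + δ) :=
            mul_le_mul_of_nonneg_right h1 (le_of_lt h2)
        _ = δ / 4 := by field_simp
    have hrε : Tendsto (fun x : ℝ => (ℙ (ES (ε' * x))).toReal) atTop (𝓝 0) :=
      hr0.comp ((tendsto_id (α := ℝ)).const_mul_atTop hε'0)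
    obtain ⟨N₁, hN₁⟩ := Metric.tendsto_atTop.1 hHt (δ / 2) (by linarith)
    obtain ⟨N₂, hN₂⟩ := Metric.tendsto_atTop.1 hQ (δ / 4) (by linarith)
    obtain ⟨N₃, hN₃⟩ := Metric.tendsto_atTop.1 hrε δ'' hδ''0
    refine ⟨max (max N₁ N₂) (max N₃ 1), fun x hx => ?_⟩
    have hxN₁ : N₁ ≤ x := le_trans (le_trans (le_max_left _ _) (le_max_left _ _)) hx
    have hxN₂ : N₂ ≤ x := le_trans (le_trans (le_max_right _ _) (le_max_left _ _)) hx
    have hxN₃ : N₃ ≤ x := le_trans (le_trans (le_max_left _ _) (le_max_right _ _)) hx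
    have hx1 : (1 : ℝ) ≤ x := le_trans (le_trans (le_max_right _ _) (le_max_right _ _)) hx
    have hx0 : (0 : ℝ) < x := lt_of_lt_of_le one_pos hx1
    have hP1 := hN₁ x hxN₁
    have hP2 := hN₂ x hxN₂
    have hP3 := hN₃ x hxN₃
    rw [Real.dist_eq] at hP1 hP2
    set p : ℝ := (ℙ (EMc x)).toReal with hpdef
    set q : ℝ := (ℙ (EI (c' * x))).toReal with hqdef
    set q₀ : ℝ := (ℙ (EI x)).toReal with hq₀def
    set r : ℝ := (ℙ (ES (ε' * x))).toReal with hrdef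
    have hxα : (0 : ℝ) ≤ x ^ α := Real.rpow_nonneg (le_of_lt hx0) _
    have hstar' : p ≤ q + r * p := by
      have h0 := hstar x ε' hx0
      have h1e : (1 - ε') = c' := by rw [hε'def]; ring
      rw [h1e] at h0
      have hfin : ℙ (EI (c' * x)) + ℙ (ES (ε' * x)) * ℙ (EMc x) ≠ ⊤ :=
        ENNReal.add_ne_top.2 ⟨measure_ne_top _ _,
          ENNReal.mul_ne_top (measure_ne_top _ _) (measure_ne_top _ _)⟩
      have h2 := ENNReal.toReal_mono hfin h0
      rw [ENNReal.toReal_add (measure_ne_top _ _)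
        (ENNReal.mul_ne_top (measure_ne_top _ _) (measure_ne_top _ _)),
        ENNReal.toReal_mul] at h2
      exact h2
    have hlow' : q₀ ≤ p := by
      refine ENNReal.toReal_mono (measure_ne_top _ _) (measure_mono ?_)
      have h1 := hlow x
      rw [hEM_eq x hx0] at h1
      exact h1
    have hP1' := abs_lt.1 hP1
    have hP2' := abs_lt.1 hP2
    have hr0' : (0 : ℝ) ≤ r := ENNReal.toReal_nonneg
    have hrδ : r < δ'' := by
      rw [Real.dist_eq, sub_zero, abs_of_nonneg hr0'] at hP3
      exact hP3
    have hlower : k * t - δ < p * x ^ α := by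
      have h1 : q₀ * x ^ α ≤ p * x ^ α := mul_le_mul_of_nonneg_right hlow' hxα
      linarith [hP1'.1]
    have hupper : p * x ^ α < k * t + δ := by
      have hQx : q * x ^ α < k * t + δ / 2 := by linarith [hP2'.2, hc'bound]
      have hmulstar : p * x ^ α ≤ (q + r * p) * x ^ α :=
        mul_le_mul_of_nonneg_right hstar' hxα
      have hexp : (q + r * p) * x ^ α = q * x ^ α + r * (p * x ^ α) := by ring
      have hPle : p * x ^ α * (1 - r) ≤ q * x ^ α := by
        have : p * x ^ α * (1 - r) = p * x ^ α - r * (p * x ^ α) := by ring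
        rw [this]
        rw [hexp] at hmulstar
        linarith
      have hPnn : (0 : ℝ) ≤ p * x ^ α := mul_nonneg ENNReal.toReal_nonneg hxα
      have h1r : 1 - δ'' ≤ 1 - r := by linarith
      have key : p * x ^ α * (1 - δ'') ≤ q * x ^ α :=
        le_trans (mul_le_mul_of_nonneg_left h1r hPnn) hPle
      by_contra hcon
      push_neg at hcon
      have h2 : (k * t + δ) * (1 - δ'') ≤ p * x ^ α * (1 - δ'') :=
        mul_le_mul_of_nonneg_right hcon (by linarith)
      have hql : (k * t + δ) * (1 - δ'') ≤ q * x ^ α := le_trans h2 key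
      nlinarith [hδ''small, hQx]
    rw [Real.dist_eq]
    exact abs_lt.2 ⟨by linarith, by linarith⟩
  refine hmain.congr' ?_
  filter_upwards [eventually_gt_atTop (0 : ℝ)] with x hx
  rw [hEM_eq x hx]
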